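/- Any compact spherically convex subset ω ⊊ S^m is contained in a closed geodesic ball of radius π/2, and the full sphere S^m is an isolated point of the space 𝓒 of compact spherically convex sets with the Hausdorff metric. -/

import Mathlib

open MeasureTheory Metric Set Real
open scoped ENNReal

noncomputable section

abbrev Euc (m : ℕ) : Type := EuclideanSpace ℝ (Fin (m + 1))

abbrev Sph (m : ℕ) : Type := Metric.sphere (0 : Euc m) 1

/-- geodesic distance on the sphere -/
def gdist {m : ℕ} (n x : Sph m) : ℝ :=
  Real.arccos (inner ℝ (n : Euc m) (x : Euc m))

/-- the logarithmic cost, with values in `[0,∞]` -/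
def cost {m : ℕ} (n x : Sph m) : ℝ≥0∞ :=
  if 0 < (inner ℝ (n : Euc m) (x : Euc m) : ℝ) then
    ENNReal.ofReal (-Real.log (inner ℝ (n : Euc m) (x : Euc m))) else ∞

/-- the uniform probability measure on the sphere -/
def unif (m : ℕ) : Measure (Sph m) :=
  ((volume : Measure (Euc m)).toSphere Set.univ)⁻¹ • (volume : Measure (Euc m)).toSphere

/-- the radial function of a set with respect to the origin -/
def radial {m : ℕ} (Ω : Set (Euc m)) (x : Sph m) : ℝ :=
  sSup {s : ℝ | 0 ≤ s ∧ s • (x : Euc m) ∈ Ω}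

/-- the Euclidean cone generated by a subset of the sphere -/
def cone {m : ℕ} (A : Set (Sph m)) : Set (Euc m) :=
  {y | ∃ r : ℝ, 0 ≤ r ∧ ∃ x ∈ A, y = r • (x : Euc m)}

/-- a subset of the sphere is spherically convex if the cone it generates is convex -/
def SphConvex {m : ℕ} (A : Set (Sph m)) : Prop := Convex ℝ (cone A)

/-- open `r`-neighbourhood for the geodesic distance -/
def nbhd {m : ℕ} (V : Set (Sph m)) (r : ℝ) : Set (Sph m) :=
  {y | ∃ x ∈ V, gdist y x < r}

/-- the spherical polar set -/
def spolar {m : ℕ} (ω : Set (Sph m)) : Set (Sph m) :=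
  {y | ∀ x ∈ ω, (inner ℝ (y : Euc m) (x : Euc m) : ℝ) ≤ 0}

/-- the support function of a star-shaped set -/
def suppFn {m : ℕ} (F : Set (Euc m)) (n : Sph m) : ℝ :=
  ⨆ x : Sph m, radial F x * (inner ℝ (x : Euc m) (n : Euc m) : ℝ)

/-- the polar set in Euclidean space -/
def polar {m : ℕ} (F : Set (Euc m)) : Set (Euc m) :=
  {n | ∀ x ∈ F, (inner ℝ x n : ℝ) ≤ 1}

/-- the logarithmic cost, with values in `ℝ ∪ {±∞}` -/
def costE {m : ℕ} (n x : Sph m) : EReal :=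
  if 0 < (inner ℝ (n : Euc m) (x : Euc m) : ℝ) then
    ((-Real.log (inner ℝ (n : Euc m) (x : Euc m)) : ℝ) : EReal) else ⊤

lemma norm_coe_sph {m : ℕ} (x : Sph m) : ‖(x : Euc m)‖ = 1 := by
  have := x.2
  simpa [mem_sphere_iff_norm] using this

lemma cone_smul_mem {m : ℕ} {A : Set (Sph m)} {y : Euc m} (hy : y ∈ cone A) {c : ℝ}
    (hc : 0 ≤ c) : c • y ∈ cone A := by
  obtain ⟨r, hr, x, hx, rfl⟩ := hy
  exact ⟨c * r, mul_nonneg hc hr, x, hx, by rw [smul_smul]⟩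

lemma zero_mem_cone {m : ℕ} {A : Set (Sph m)} (h : A.Nonempty) : 0 ∈ cone A := by
  obtain ⟨x, hx⟩ := h
  exact ⟨0, le_refl 0, x, hx, by simp⟩

lemma isClosed_cone {m : ℕ} {ω : Set (Sph m)} (hω : IsCompact ω) : IsClosed (cone ω) := by
  rcases ω.eq_empty_or_nonempty with h | hne
  · subst h
    have : cone (∅ : Set (Sph m)) = ∅ := by
      ext y; simp [cone]
    simp [this]
  rw [← isSeqClosed_iff_isClosed]
  intro y l hy hl
  choose r hr x hx hyx using hy
  have hrn : ∀ n, r n = ‖y n‖ := by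
    intro n
    rw [hyx n, norm_smul, norm_coe_sph, mul_one, Real.norm_of_nonneg (hr n)]
  obtain ⟨a, ha, φ, hφ, hxa⟩ := hω.tendsto_subseq hx
  have hnorm : Filter.Tendsto (fun n => r (φ n)) Filter.atTop (nhds ‖l‖) := by
    simpa [hrn, Function.comp_def] using (hl.norm.comp hφ.tendsto_atTop)
  have hcoe : Filter.Tendsto (fun n => ((x (φ n) : Euc m))) Filter.atTop (nhds (a : Euc m)) :=
    (continuous_subtype_val.continuousAt.tendsto.comp hxa)
  have h1 : Filter.Tendsto (fun n => y (φ n)) Filter.atTop (nhds (‖l‖ • (a : Euc m))) := by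
    simpa [hyx] using hnorm.smul hcoe
  have h2 : Filter.Tendsto (fun n => y (φ n)) Filter.atTop (nhds l) :=
    hl.comp hφ.tendsto_atTop
  have : l = ‖l‖ • (a : Euc m) := tendsto_nhds_unique h2 h1
  exact ⟨‖l‖, norm_nonneg l, a, ha, this⟩

lemma exists_pole {m : ℕ} (ω : Set (Sph m)) (hne : ω.Nonempty) (hc : IsCompact ω)
    (hconv : SphConvex ω) (hne' : ω ≠ Set.univ) :
    ∃ p : Sph m, ∀ x ∈ ω, 0 ≤ (inner ℝ (p : Euc m) (x : Euc m) : ℝ) := by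
  obtain ⟨q, hq⟩ : ∃ q : Sph m, q ∉ ω := by
    by_contra h; push_neg at h; exact hne' (eq_univ_of_forall h)
  have hqc : (q : Euc m) ∉ cone ω := by
    rintro ⟨r, hrr, x, hx, hqx⟩
    have h1 : (1:ℝ) = r := by
      have := norm_coe_sph q
      rw [hqx, norm_smul, norm_coe_sph, mul_one, Real.norm_of_nonneg hrr] at this
      exact this.symm
    have : q = x := Subtype.ext (by rw [hqx, ← h1, one_smul])
    exact hq (this ▸ hx)
  obtain ⟨f, u, hfu, hu⟩ := geometric_hahn_banach_closed_point hconv (isClosed_cone hc) hqc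
  have hu0 : (0:ℝ) < u := by
    have := hfu 0 (zero_mem_cone hne); simpa using this
  have hf_nonpos : ∀ x ∈ ω, f (x : Euc m) ≤ 0 := by
    intro x hx
    by_contra h
    push_neg at h
    have hmem : ((u / f (x : Euc m) + 1) • (x : Euc m)) ∈ cone ω := by
      apply cone_smul_mem ⟨1, zero_le_one, x, hx, (one_smul _ _).symm⟩
      positivity
    have h2 := hfu _ hmem
    rw [_root_.map_smul, smul_eq_mul] at h2
    have : u / f (x:Euc m) * f (x:Euc m) = u := div_mul_cancel₀ u (ne_of_gt h)
    nlinarith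
  set v := (InnerProductSpace.toDual ℝ (Euc m)).symm f with hv
  have hvx : ∀ w : Euc m, (inner ℝ v w : ℝ) = f w := fun w =>
    InnerProductSpace.toDual_symm_apply
  have hvne : v ≠ 0 := by
    intro h0
    have : f (q : Euc m) = 0 := by rw [← hvx, h0, inner_zero_left]
    linarith [hu.trans_eq this]
  have hnv : ‖(‖v‖⁻¹ • -v : Euc m)‖ = 1 := by
    rw [norm_smul, norm_neg, norm_inv, norm_norm]
    exact inv_mul_cancel₀ (norm_ne_zero_iff.mpr hvne)
  refine ⟨⟨‖v‖⁻¹ • -v, by simpa [mem_sphere_iff_norm] using hnv⟩, ?_⟩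
  intro x hx
  have : (inner ℝ (‖v‖⁻¹ • -v) (x : Euc m) : ℝ) = ‖v‖⁻¹ * (-(f (x : Euc m))) := by
    rw [real_inner_smul_left, inner_neg_left, hvx]
  rw [this]
  have h3 := hf_nonpos x hx
  exact mul_nonneg (by positivity) (by linarith)

instance sph_nonempty (m : ℕ) : Nonempty (Sph m) :=
  ((NormedSpace.sphere_nonempty (x := (0 : Euc m))).mpr zero_le_one).to_subtype

/-- a proper compact spherically convex set lies in a closed ball of radius
`π/2`, and the full sphere is an isolated point of the space of spherically convex sets. -/
theorem convex_in_halfsphere_and_univ_isolated (m : ℕ) :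
    (∀ ω : Set (Sph m), ω.Nonempty → IsCompact ω → SphConvex ω → ω ≠ Set.univ →
      ∃ p : Sph m, ∀ x ∈ ω, gdist p x ≤ π / 2) ∧
    ∃ ε : ℝ, 0 < ε ∧ ∀ K : TopologicalSpace.NonemptyCompacts (Sph m),
      SphConvex (K : Set (Sph m)) →
      dist K (⟨⟨Set.univ, isCompact_univ⟩, Set.univ_nonempty⟩ :
        TopologicalSpace.NonemptyCompacts (Sph m)) < ε →
      (K : Set (Sph m)) = Set.univ := by
  constructor
  · intro ω hne hc hconv hne'
    obtain ⟨p, hp⟩ := exists_pole ω hne hc hconv hne'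
    exact ⟨p, fun x hx => Real.arccos_le_pi_div_two.mpr (hp x hx)⟩
  · refine ⟨1, one_pos, fun K hK hdist => ?_⟩
    by_contra hKne
    obtain ⟨p, hp⟩ := exists_pole (K : Set (Sph m)) K.nonempty K.isCompact hK hKne
    -- antipode
    have hnp : ‖(-(p : Euc m))‖ = 1 := by rw [norm_neg, norm_coe_sph]
    set q : Sph m := ⟨-(p : Euc m), by simpa [mem_sphere_iff_norm] using hnp⟩ with hqdef
    have hdq : ∀ x ∈ (K : Set (Sph m)), (1:ℝ) ≤ dist q x := by
      intro x hx
      have hip := hp x hx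
      have hsq : dist q x ^ 2 = 2 + 2 * (inner ℝ (p : Euc m) (x : Euc m) : ℝ) := by
        rw [Subtype.dist_eq, dist_eq_norm]
        have := @norm_sub_sq_real (Euc m) _ _ (-(p : Euc m)) (x : Euc m)
        rw [this, hnp, norm_coe_sph, inner_neg_left]
        ring
      nlinarith [dist_nonneg (x := q) (y := x)]
    have hfin : EMetric.hausdorffEdist (Set.univ : Set (Sph m)) (K : Set (Sph m)) ≠ ⊤ :=
      Metric.hausdorffEdist_ne_top_of_nonempty_of_bounded Set.univ_nonempty K.nonempty
        (isCompact_univ.isBounded) K.isCompact.isBounded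
    have h1 : Metric.infDist q (K : Set (Sph m)) ≤
        Metric.hausdorffDist (Set.univ : Set (Sph m)) (K : Set (Sph m)) :=
      Metric.infDist_le_hausdorffDist_of_mem (Set.mem_univ q) hfin
    have h2 : (1:ℝ) ≤ Metric.infDist q (K : Set (Sph m)) := by
      by_contra h
      push_neg at h
      obtain ⟨y, hy, hdy⟩ := (Metric.infDist_lt_iff K.nonempty).mp h
      exact absurd hdy (not_lt.mpr (hdq y hy))
    have h3 : dist K (⟨⟨Set.univ, isCompact_univ⟩, Set.univ_nonempty⟩ :
        TopologicalSpace.NonemptyCompacts (Sph m)) =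
        Metric.hausdorffDist (K : Set (Sph m)) (Set.univ : Set (Sph m)) := rfl
    rw [h3, Metric.hausdorffDist_comm] at hdist
    linarith
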